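/- arXiv:1304.3042 — 2 statements merged into one kernel-verified Lean document; each statement's English description precedes it below -/
import Mathlib

section
/- Assume I is a real interval centered at 0 with [−1,1] ⊆ I. A function f : Iⁿ → ℝ is a symmetric signed Choquet integral if and only if: (i) f is comonotonically modular, and (ii) f(x·1_S) = x·f(1_S) for all x ∈ I and S ⊆ X. -/
/-- `S↑_σ(i)` (0-indexed): the set `{σ(i), σ(i+1), …, σ(n-1)}`.  For `i = n` it is empty. -/
def SUp {n : ℕ} (σ : Equiv.Perm (Fin n)) (i : ℕ) : Finset (Fin n) :=
  (Finset.univ.filter (fun j : Fin n => i ≤ (j : ℕ))).image σ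

/-- `S↓_σ(i)`: the set `{σ(0), …, σ(i-1)}`.  For `i = 0` it is empty. -/
def SDown {n : ℕ} (σ : Equiv.Perm (Fin n)) (i : ℕ) : Finset (Fin n) :=
  (Finset.univ.filter (fun j : Fin n => (j : ℕ) < i)).image σ

/-- Two tuples are comonotonic if some permutation sorts both nondecreasingly. -/
def Comonotone {n : ℕ} (x y : Fin n → ℝ) : Prop :=
  ∃ σ : Equiv.Perm (Fin n), Monotone (x ∘ σ) ∧ Monotone (y ∘ σ)

/-- The tuple `r·1_S`. -/
def indTuple {n : ℕ} (S : Finset (Fin n)) (r : ℝ) : Fin n → ℝ :=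
  fun j => if j ∈ S then r else 0

/-- The signed Choquet integral of `x` w.r.t. `v`, computed via a sorting permutation. -/
noncomputable def Cv {n : ℕ} (v : Finset (Fin n) → ℝ) (x : Fin n → ℝ) : ℝ :=
  ∑ i : Fin n,
    x (Tuple.sort x i) *
      (v (SUp (Tuple.sort x) (i : ℕ)) - v (SUp (Tuple.sort x) ((i : ℕ) + 1)))

/-- `f` is the restriction to `Iⁿ` of a signed Choquet integral. -/
def IsSignedChoquetOn {n : ℕ} (I : Set ℝ) (f : (Fin n → ℝ) → ℝ) : Prop :=
  ∃ v : Finset (Fin n) → ℝ, v ∅ = 0 ∧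
    ∀ σ : Equiv.Perm (Fin n), ∀ x : Fin n → ℝ, (∀ i, x i ∈ I) → Monotone (x ∘ σ) →
      f x = ∑ i : Fin n, x (σ i) * (v (SUp σ (i : ℕ)) - v (SUp σ ((i : ℕ) + 1)))

/-- `f` is the restriction to `Iⁿ` of a symmetric signed Choquet integral
`Č_v(x) = C_v(x⁺) - C_v(x⁻)`. -/
def IsSymSignedChoquetOn {n : ℕ} (I : Set ℝ) (f : (Fin n → ℝ) → ℝ) : Prop :=
  ∃ v : Finset (Fin n) → ℝ, v ∅ = 0 ∧
    ∀ x : Fin n → ℝ, (∀ i, x i ∈ I) →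
      f x = Cv v (fun i => max (x i) 0) - Cv v (fun i => max (-x i) 0)

/-- Comonotonic modularity (on tuples with entries in `D`). -/
def ComonModularOn {n : ℕ} (D : Set ℝ) (f : (Fin n → ℝ) → ℝ) : Prop :=
  ∀ x y : Fin n → ℝ, (∀ i, x i ∈ D) → (∀ i, y i ∈ D) → Comonotone x y →
    f x + f y = f (fun i => min (x i) (y i)) + f (fun i => max (x i) (y i))

/-- Comonotonic additivity (on tuples with entries in `D`). -/
def ComonAdditiveOn {n : ℕ} (D : Set ℝ) (f : (Fin n → ℝ) → ℝ) : Prop :=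
  ∀ x y : Fin n → ℝ, (∀ i, x i ∈ D) → (∀ i, y i ∈ D) → Comonotone x y →
    (∀ i, x i + y i ∈ D) → f (fun i => x i + y i) = f x + f y

/-- Comonotonic maxitivity. -/
def ComonMaxitiveOn {n : ℕ} (D : Set ℝ) (f : (Fin n → ℝ) → ℝ) : Prop :=
  ∀ x y : Fin n → ℝ, (∀ i, x i ∈ D) → (∀ i, y i ∈ D) → Comonotone x y →
    f (fun i => max (x i) (y i)) = max (f x) (f y)

/-- Comonotonic minitivity. -/
def ComonMinitiveOn {n : ℕ} (D : Set ℝ) (f : (Fin n → ℝ) → ℝ) : Prop :=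
  ∀ x y : Fin n → ℝ, (∀ i, x i ∈ D) → (∀ i, y i ∈ D) → Comonotone x y →
    f (fun i => min (x i) (y i)) = min (f x) (f y)

/-- Horizontal min-additivity. -/
def HorizMinAdditiveOn {n : ℕ} (D : Set ℝ) (f : (Fin n → ℝ) → ℝ) : Prop :=
  ∀ x : Fin n → ℝ, (∀ i, x i ∈ D) → ∀ c ∈ D, (∀ i, x i - min (x i) c ∈ D) →
    f x = f (fun i => min (x i) c) + f (fun i => x i - min (x i) c)

/-- Horizontal max-additivity. -/
def HorizMaxAdditiveOn {n : ℕ} (D : Set ℝ) (f : (Fin n → ℝ) → ℝ) : Prop :=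
  ∀ x : Fin n → ℝ, (∀ i, x i ∈ D) → ∀ c ∈ D, (∀ i, x i - max (x i) c ∈ D) →
    f x = f (fun i => max (x i) c) + f (fun i => x i - max (x i) c)

/-- Horizontal median-additivity (for `I` centered at `0`). -/
def HorizMedAdditiveOn {n : ℕ} (I : Set ℝ) (f : (Fin n → ℝ) → ℝ) : Prop :=
  ∀ x : Fin n → ℝ, (∀ i, x i ∈ I) → ∀ c ∈ I, 0 ≤ c →
    f x = f (fun i => max (-c) (min (x i) c)) + f (fun i => x i - min (x i) c)
        + f (fun i => x i - max (x i) (-c))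

/-- Invariance under horizontal min-differences (for domains of nonnegative tuples). -/
def InvHMinDiffOn {n : ℕ} (D : Set ℝ) (f : (Fin n → ℝ) → ℝ) : Prop :=
  ∀ x : Fin n → ℝ, (∀ i, x i ∈ D) → ∀ c ∈ D,
    f x - f (fun i => min (x i) c) =
      f (fun i => if x i ≤ c then 0 else x i) -
        f (fun i => min (if x i ≤ c then 0 else x i) c)

/-- Invariance under horizontal max-differences (for domains of nonpositive tuples). -/
def InvHMaxDiffOn {n : ℕ} (D : Set ℝ) (f : (Fin n → ℝ) → ℝ) : Prop :=
  ∀ x : Fin n → ℝ, (∀ i, x i ∈ D) → ∀ c ∈ D,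
    f x - f (fun i => max (x i) c) =
      f (fun i => if c ≤ x i then 0 else x i) -
        f (fun i => max (if c ≤ x i then 0 else x i) c)

/-- `⋀_{i ∈ S} x i`, with the convention that the empty infimum is `b`. -/
noncomputable def infWith {n : ℕ} (b : ℝ) (S : Finset (Fin n)) (x : Fin n → ℝ) : ℝ :=
  if h : S.Nonempty then S.inf' h x else b

/-- An `[a,b]`-valued capacity. -/
def IsCapacityOn {n : ℕ} (a b : ℝ) (μ : Finset (Fin n) → ℝ) : Prop :=
  μ ∅ = a ∧ μ Finset.univ = b ∧ ∀ S T : Finset (Fin n), S ⊆ T → μ S ≤ μ T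

/-- `f` is nondecreasing (in each argument) on tuples with entries in `D`. -/
def NondecreasingOn {n : ℕ} (D : Set ℝ) (f : (Fin n → ℝ) → ℝ) : Prop :=
  ∀ x y : Fin n → ℝ, (∀ i, x i ∈ D) → (∀ i, y i ∈ D) → (∀ i, x i ≤ y i) → f x ≤ f y


section ChoquetAux
open Finset

lemma SUp_zero {n : ℕ} (σ : Equiv.Perm (Fin n)) : SUp σ 0 = Finset.univ := by
  ext j
  simp only [SUp, mem_image, mem_filter, mem_univ, true_and, iff_true]
  exact ⟨σ.symm j, Nat.zero_le _, σ.apply_symm_apply j⟩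

lemma SUp_ge {n : ℕ} (σ : Equiv.Perm (Fin n)) (i : ℕ) (h : n ≤ i) : SUp σ i = ∅ := by
  ext j
  simp only [SUp, mem_image, mem_filter, mem_univ, true_and, Finset.notMem_empty, iff_false]
  rintro ⟨a, ha, -⟩
  have := a.isLt
  omega

lemma factJ {n : ℕ} (σ : Equiv.Perm (Fin n)) (y : Fin n → ℝ) (i : ℕ) (t : ℝ)
    (h1 : ∀ m : Fin n, (m : ℕ) < i → y (σ m) < t)
    (h2 : ∀ m : Fin n, i ≤ (m : ℕ) → t ≤ y (σ m)) :
    SUp σ i = Finset.univ.filter (fun j => t ≤ y j) := by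
  ext j
  simp only [SUp, mem_image, mem_filter, mem_univ, true_and]
  constructor
  · rintro ⟨a, ha, rfl⟩; exact h2 a ha
  · intro hj
    refine ⟨σ.symm j, ?_, σ.apply_symm_apply j⟩
    by_contra h
    push_neg at h
    have := h1 (σ.symm j) h
    rw [σ.apply_symm_apply] at this
    linarith

lemma abel_aux (n : ℕ) (g A : ℕ → ℝ) (hA : A n = 0) :
    ∑ i ∈ range n, g i * (A i - A (i + 1))
      = g 0 * A 0 + ∑ i ∈ range (n - 1), (g (i + 1) - g i) * A (i + 1) := by
  cases n with
  | zero => simp [hA]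
  | succ m =>
    simp only [Nat.succ_sub_one, mul_sub, sub_mul]
    rw [Finset.sum_sub_distrib, Finset.sum_sub_distrib,
      Finset.sum_range_succ' (fun i => g i * A i) m,
      Finset.sum_range_succ (fun i => g i * A (i + 1)) m, hA]
    ring

lemma tel_aux (c : ℝ) (A : ℕ → ℝ) :
    ∀ n m : ℕ, m ≤ n →
      ∑ i ∈ range n, (if m ≤ i then c else 0) * (A i - A (i + 1)) = c * (A m - A n) := by
  intro n
  induction n with
  | zero => intro m hm; interval_cases m; simp
  | succ k ih =>
    intro m hm
    rw [Finset.sum_range_succ]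
    by_cases h : m ≤ k
    · rw [ih m h, if_pos h]; ring
    · have hm' : m = k + 1 := by omega
      subst hm'
      rw [Finset.sum_eq_zero, if_neg h]
      · simp
      · intro i hi
        rw [if_neg (by simp at hi; omega)]
        ring

lemma sum_eq_canon {n : ℕ} (v : Finset (Fin n) → ℝ) (hv0 : v ∅ = 0) (y : Fin n → ℝ)
    (σ : Equiv.Perm (Fin n)) (hσ : Monotone (y ∘ σ)) (g : ℕ → ℝ)
    (hg : ∀ i : Fin n, g (i : ℕ) = y (σ i)) :
    ∑ i : Fin n, y (σ i) * (v (SUp σ (i : ℕ)) - v (SUp σ ((i : ℕ) + 1)))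
      = g 0 * v Finset.univ
        + ∑ i ∈ Finset.range (n - 1),
            (g (i + 1) - g i) * v (Finset.univ.filter fun j => g (i + 1) ≤ y j) := by
  set A : ℕ → ℝ := fun k => v (SUp σ k) with hA
  have hAn : A n = 0 := by rw [hA]; simp only; rw [SUp_ge σ n le_rfl, hv0]
  have h1 : ∑ i : Fin n, y (σ i) * (v (SUp σ (i : ℕ)) - v (SUp σ ((i : ℕ) + 1)))
      = ∑ i ∈ range n, g i * (A i - A (i + 1)) := by
    rw [← Fin.sum_univ_eq_sum_range (fun k => g k * (A k - A (k + 1))) n]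
    exact Finset.sum_congr rfl (fun i _ => by rw [hg i])
  rw [h1, abel_aux n g A hAn]
  have hA0 : A 0 = v Finset.univ := by rw [hA]; simp only; rw [SUp_zero]
  rw [hA0]
  congr 1
  refine Finset.sum_congr rfl (fun i hi => ?_)
  have hilt : i + 1 < n := by simp at hi; omega
  have hilt' : i < n := by omega
  by_cases hgg : g (i + 1) = g i
  · rw [hgg, sub_self, zero_mul, zero_mul]
  · have hmono : g i ≤ g (i + 1) := by
      rw [hg ⟨i, hilt'⟩, hg ⟨i + 1, hilt⟩]
      exact hσ (by simp [Fin.le_def])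
    have hlt : g i < g (i + 1) := lt_of_le_of_ne hmono (fun h => hgg h.symm)
    have hAeq : A (i + 1) = v (Finset.univ.filter fun j => g (i + 1) ≤ y j) := by
      rw [hA]; simp only
      rw [factJ σ y (i + 1) (g (i + 1))]
      · intro m hm
        have hmi : m ≤ (⟨i, hilt'⟩ : Fin n) := by simp [Fin.le_def]; omega
        calc y (σ m) ≤ y (σ ⟨i, hilt'⟩) := hσ hmi
          _ = g i := (hg ⟨i, hilt'⟩).symm
          _ < g (i + 1) := hlt
      · intro m hm
        have hmi : (⟨i + 1, hilt⟩ : Fin n) ≤ m := by simp [Fin.le_def]; omega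
        calc g (i + 1) = y (σ ⟨i + 1, hilt⟩) := hg ⟨i + 1, hilt⟩
          _ ≤ y (σ m) := hσ hmi
    rw [hAeq]

lemma sum_indep {n : ℕ} (v : Finset (Fin n) → ℝ) (hv0 : v ∅ = 0) (y : Fin n → ℝ)
    {σ τ : Equiv.Perm (Fin n)} (hσ : Monotone (y ∘ σ)) (hτ : Monotone (y ∘ τ)) :
    ∑ i : Fin n, y (σ i) * (v (SUp σ (i : ℕ)) - v (SUp σ ((i : ℕ) + 1)))
      = ∑ i : Fin n, y (τ i) * (v (SUp τ (i : ℕ)) - v (SUp τ ((i : ℕ) + 1))) := by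
  set g : ℕ → ℝ := fun i => if h : i < n then y (σ ⟨i, h⟩) else 0 with hgdef
  have hgσ : ∀ i : Fin n, g (i : ℕ) = y (σ i) := fun i => by
    rw [hgdef]; simp only; rw [dif_pos i.isLt]
  have heq : y ∘ σ = y ∘ τ := Tuple.unique_monotone hσ hτ
  have hgτ : ∀ i : Fin n, g (i : ℕ) = y (τ i) := fun i => by
    rw [hgσ i]; exact congrFun heq i
  rw [sum_eq_canon v hv0 y σ hσ g hgσ, sum_eq_canon v hv0 y τ hτ g hgτ]

lemma Cv_eq {n : ℕ} (v : Finset (Fin n) → ℝ) (hv0 : v ∅ = 0) (y : Fin n → ℝ)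
    (σ : Equiv.Perm (Fin n)) (hσ : Monotone (y ∘ σ)) :
    Cv v y = ∑ i : Fin n, y (σ i) * (v (SUp σ (i : ℕ)) - v (SUp σ ((i : ℕ) + 1))) := by
  rw [Cv]
  exact sum_indep v hv0 y (Tuple.monotone_sort y) hσ

lemma Cv_sub_tel {n : ℕ} (v : Finset (Fin n) → ℝ) (hv0 : v ∅ = 0) (u w : Fin n → ℝ)
    (σ : Equiv.Perm (Fin n)) (hu : Monotone (u ∘ σ)) (hw : Monotone (w ∘ σ))
    (m : ℕ) (hm : m ≤ n) (c : ℝ)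
    (hd : ∀ i : Fin n, u (σ i) - w (σ i) = if m ≤ (i : ℕ) then c else 0) :
    Cv v u - Cv v w = c * v (SUp σ m) := by
  rw [Cv_eq v hv0 u σ hu, Cv_eq v hv0 w σ hw, ← Finset.sum_sub_distrib]
  have h1 : ∀ i : Fin n,
      u (σ i) * (v (SUp σ (i : ℕ)) - v (SUp σ ((i : ℕ) + 1)))
        - w (σ i) * (v (SUp σ (i : ℕ)) - v (SUp σ ((i : ℕ) + 1)))
      = (fun k : ℕ => (if m ≤ k then c else 0) * (v (SUp σ k) - v (SUp σ (k + 1)))) (i : ℕ) :=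
    fun i => by rw [← sub_mul, hd i]
  rw [Finset.sum_congr rfl (fun i _ => h1 i),
    Fin.sum_univ_eq_sum_range (fun k : ℕ => (if m ≤ k then c else 0) * (v (SUp σ k) - v (SUp σ (k + 1)))) n,
    tel_aux c (fun k => v (SUp σ k)) n m hm]
  rw [SUp_ge σ n le_rfl, hv0]
  ring

lemma Cv_modular {n : ℕ} (v : Finset (Fin n) → ℝ) (hv0 : v ∅ = 0) (u w : Fin n → ℝ)
    (σ : Equiv.Perm (Fin n)) (hu : Monotone (u ∘ σ)) (hw : Monotone (w ∘ σ)) :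
    Cv v u + Cv v w
      = Cv v (fun i => min (u i) (w i)) + Cv v (fun i => max (u i) (w i)) := by
  rw [Cv_eq v hv0 u σ hu, Cv_eq v hv0 w σ hw,
    Cv_eq v hv0 (fun i => min (u i) (w i)) σ (hu.min hw),
    Cv_eq v hv0 (fun i => max (u i) (w i)) σ (hu.max hw),
    ← Finset.sum_add_distrib, ← Finset.sum_add_distrib]
  refine Finset.sum_congr rfl (fun i _ => ?_)
  rw [← add_mul, ← add_mul, min_add_max]

lemma Cv_smul {n : ℕ} (v : Finset (Fin n) → ℝ) (hv0 : v ∅ = 0) (t : ℝ) (ht : 0 ≤ t)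
    (y : Fin n → ℝ) : Cv v (fun i => t * y i) = t * Cv v y := by
  set σ := Tuple.sort y with hσdef
  have hσ : Monotone (y ∘ σ) := Tuple.monotone_sort y
  have hσ' : Monotone ((fun i => t * y i) ∘ σ) := fun a b hab => by
    simp only [Function.comp_apply]
    exact mul_le_mul_of_nonneg_left (hσ hab) ht
  rw [Cv_eq v hv0 y σ hσ, Cv_eq v hv0 (fun i => t * y i) σ hσ', Finset.mul_sum]
  exact Finset.sum_congr rfl (fun i _ => by ring)

lemma Cv_zero {n : ℕ} (v : Finset (Fin n) → ℝ) : Cv v (fun _ => 0) = 0 := by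
  simp [Cv]

lemma key {n : ℕ} (hn : 0 < n) (I : Set ℝ) (h0 : (0 : ℝ) ∈ I)
    (f : (Fin n → ℝ) → ℝ) (v : Finset (Fin n) → ℝ)
    (hmod : ComonModularOn I f)
    (hv : ∀ c ∈ I, ∀ S : Finset (Fin n), f (indTuple S c) = c * v S)
    (hv0 : v ∅ = 0) :
    ∀ y : Fin n → ℝ, (∀ i, y i ∈ I) → (∀ i, 0 ≤ y i) → f y = Cv v y := by
  suffices H : ∀ d : ℕ, ∀ y : Fin n → ℝ, (∀ i, y i ∈ I) → (∀ i, 0 ≤ y i) →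
      (Finset.univ.image y).card ≤ d → f y = Cv v y by
    exact fun y hyI hy0 => H _ y hyI hy0 le_rfl
  intro d
  induction d with
  | zero =>
    intro y _ _ hcard
    exfalso
    have hne : (Finset.univ.image y).Nonempty := ⟨y ⟨0, hn⟩, mem_image_of_mem y (mem_univ _)⟩
    have := Finset.card_pos.mpr hne
    omega
  | succ d ih =>
    intro y hyI hy0 hcard
    set T := Finset.univ.image y with hT
    have hTne : T.Nonempty := ⟨y ⟨0, hn⟩, mem_image_of_mem y (mem_univ _)⟩
    set b := T.max' hTne with hb
    obtain ⟨jb, -, hjb⟩ := mem_image.mp (T.max'_mem hTne)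
    have hbI : b ∈ I := by rw [hb, ← hjb]; exact hyI jb
    have hb0 : (0 : ℝ) ≤ b := by rw [hb, ← hjb]; exact hy0 jb
    have hble : ∀ j, y j ≤ b := fun j => T.le_max' (y j) (mem_image_of_mem y (mem_univ _))
    by_cases hconst : ∀ j, y j = b
    · -- constant case
      have hyy : y = indTuple Finset.univ b := funext fun j => by
        simp [indTuple, hconst j]
      have hfy : f y = b * v Finset.univ := by rw [hyy]; exact hv b hbI _
      have hcv : Cv v y - Cv v (fun _ => 0) = b * v (SUp (1 : Equiv.Perm (Fin n)) 0) := by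
        refine Cv_sub_tel v hv0 y (fun _ => 0) 1 ?_ ?_ 0 (Nat.zero_le n) b ?_
        · intro p q hpq
          simp only [Function.comp_apply, Equiv.Perm.coe_one, id_eq]
          rw [hconst p, hconst q]
        · exact fun p q hpq => le_rfl
        · intro i
          simp [hconst]
      rw [Cv_zero, sub_zero, SUp_zero] at hcv
      rw [hfy, hcv]
    · push_neg at hconst
      obtain ⟨j0, hj0⟩ := hconst
      set T' := T.filter (fun t => t < b) with hT'
      have hT'ne : T'.Nonempty := by
        refine ⟨y j0, mem_filter.mpr ⟨mem_image_of_mem y (mem_univ _), ?_⟩⟩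
        exact lt_of_le_of_ne (hble j0) hj0
      set a := T'.max' hT'ne with ha
      have haT' : a ∈ T' := T'.max'_mem hT'ne
      have haT : a ∈ T := (mem_filter.mp haT').1
      have halt : a < b := (mem_filter.mp haT').2
      obtain ⟨ja, -, hja⟩ := mem_image.mp haT
      have haI : a ∈ I := by rw [← hja]; exact hyI ja
      have ha0 : (0 : ℝ) ≤ a := by rw [← hja]; exact hy0 ja
      have hya : ∀ j, y j ≠ b → y j ≤ a := by
        intro j hjne
        refine T'.le_max' (y j) (mem_filter.mpr ⟨mem_image_of_mem y (mem_univ _), ?_⟩)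
        exact lt_of_le_of_ne (hble j) hjne
      set S := Finset.univ.filter (fun j => y j = b) with hS
      set ya : Fin n → ℝ := fun i => min (y i) a with hyadef
      -- memberships
      have hindI : ∀ (U : Finset (Fin n)) (c : ℝ), c ∈ I → ∀ i, indTuple U c i ∈ I := by
        intro U c hc i
        by_cases h : i ∈ U <;> simp [indTuple, h, hc, h0]
      -- step: two-block value
      have h2block : f (fun i => max (y i) a) = (b - a) * v S + a * v Finset.univ := by
        have hco : Comonotone (indTuple S b) (indTuple Finset.univ a) := by
          refine ⟨Tuple.sort (indTuple S b), Tuple.monotone_sort _, ?_⟩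
          intro p q hpq
          simp [indTuple]
        have := hmod (indTuple S b) (indTuple Finset.univ a)
          (hindI S b hbI) (hindI Finset.univ a haI) hco
        have emin : (fun i => min (indTuple S b i) (indTuple Finset.univ a i)) = indTuple S a := by
          funext i
          by_cases h : i ∈ S
          · simp [indTuple, h, min_eq_right halt.le]
          · simp [indTuple, h, min_eq_left ha0]
        have emax : (fun i => max (indTuple S b i) (indTuple Finset.univ a i))
            = fun i => max (y i) a := by
          funext i
          by_cases h : i ∈ S
          · have hyi : y i = b := (mem_filter.mp h).2
            simp [indTuple, h, hyi]
          · have hyi : y i ≤ a := by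
              refine hya i (fun hb' => h ?_)
              exact mem_filter.mpr ⟨mem_univ _, hb'⟩
            simp [indTuple, h, max_eq_right ha0, max_eq_right hyi]
        rw [emin, emax, hv b hbI S, hv a haI Finset.univ, hv a haI S] at this
        linarith
      -- step: modularity with constant a
      have hstep : f y + f (indTuple Finset.univ a) = f ya + f (fun i => max (y i) a) := by
        have hco : Comonotone y (indTuple Finset.univ a) := by
          refine ⟨Tuple.sort y, Tuple.monotone_sort _, ?_⟩
          intro p q hpq
          simp [indTuple]
        have := hmod y (indTuple Finset.univ a) hyI (hindI Finset.univ a haI) hco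
        have emin : (fun i => min (y i) (indTuple Finset.univ a i)) = ya := by
          funext i; simp [indTuple, hyadef]
        have emax : (fun i => max (y i) (indTuple Finset.univ a i)) = fun i => max (y i) a := by
          funext i; simp [indTuple]
        rwa [emin, emax] at this
      -- induction hypothesis applies to ya
      have hyaI : ∀ i, ya i ∈ I := by
        intro i
        rcases le_total (y i) a with h | h
        · simpa [hyadef, min_eq_left h] using hyI i
        · simpa [hyadef, min_eq_right h] using haI
      have hya0 : ∀ i, 0 ≤ ya i := fun i => le_min (hy0 i) ha0
      have hyacard : (Finset.univ.image ya).card ≤ d := by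
        have hsub : Finset.univ.image ya ⊆ T.erase b := by
          intro t ht
          obtain ⟨j, -, hj⟩ := mem_image.mp ht
          by_cases hjb' : y j = b
          · have : t = a := by rw [← hj]; simp [hyadef, hjb', min_eq_right halt.le]
            subst this
            exact mem_erase.mpr ⟨ne_of_lt halt, haT⟩
          · have hja' : y j ≤ a := hya j hjb'
            have : t = y j := by rw [← hj]; simp [hyadef, min_eq_left hja']
            subst this
            exact mem_erase.mpr ⟨hjb', mem_image_of_mem y (mem_univ _)⟩
        have h1 := Finset.card_le_card hsub
        have h2 : (T.erase b).card = T.card - 1 := Finset.card_erase_of_mem (T.max'_mem hTne)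
        have h3 : 0 < T.card := Finset.card_pos.mpr hTne
        omega
      have hfya : f ya = Cv v ya := ih ya hyaI hya0 hyacard
      -- Cv computation
      set σ := Tuple.sort y with hσdef
      have hσ : Monotone (y ∘ σ) := Tuple.monotone_sort y
      set F := Finset.univ.filter (fun i : Fin n => y (σ i) = b) with hF
      have hFne : F.Nonempty := by
        refine ⟨σ.symm jb, mem_filter.mpr ⟨mem_univ _, ?_⟩⟩
        rw [σ.apply_symm_apply, hjb]
      set m := F.min' hFne with hm
      have hmF : y (σ m) = b := (mem_filter.mp (F.min'_mem hFne)).2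
      have hup : ∀ i : Fin n, (m : ℕ) ≤ (i : ℕ) → y (σ i) = b := by
        intro i hi
        have : y (σ m) ≤ y (σ i) := hσ (by rwa [Fin.le_def])
        exact le_antisymm (hble _) (hmF ▸ this)
      have hdown : ∀ i : Fin n, (i : ℕ) < (m : ℕ) → y (σ i) ≤ a := by
        intro i hi
        refine hya _ (fun hb' => ?_)
        have : m ≤ i := F.min'_le i (mem_filter.mpr ⟨mem_univ _, hb'⟩)
        rw [Fin.le_def] at this
        omega
      have hSm : SUp σ (m : ℕ) = S := by
        rw [factJ σ y (m : ℕ) b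
          (fun p hp => lt_of_le_of_lt (hdown p hp) halt)
          (fun p hp => le_of_eq (hup p hp).symm)]
        rw [hS]
        ext j
        simp only [mem_filter, mem_univ, true_and]
        exact ⟨fun h => le_antisymm (hble j) h, fun h => le_of_eq h.symm⟩
      have hcvdiff : Cv v y - Cv v ya = (b - a) * v S := by
        have hya_mono : Monotone (ya ∘ σ) := by
          intro p q hpq
          exact min_le_min (hσ hpq) le_rfl
        have := Cv_sub_tel v hv0 y ya σ hσ hya_mono (m : ℕ) (le_of_lt m.isLt) (b - a) ?_
        · rwa [hSm] at this
        · intro i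
          by_cases h : (m : ℕ) ≤ (i : ℕ)
          · rw [if_pos h]
            have hyi : y (σ i) = b := hup i h
            simp [hyadef, hyi, min_eq_right halt.le]
          · rw [if_neg h]
            push_neg at h
            have hyi : y (σ i) ≤ a := hdown i h
            simp [hyadef, min_eq_left hyi]
      have hfconst : f (indTuple Finset.univ a) = a * v Finset.univ := hv a haI _
      -- combine
      rw [hfya] at hstep
      rw [h2block, hfconst] at hstep
      linarith

lemma pmax_min (a b : ℝ) : max (min a b) 0 = min (max a 0) (max b 0) := by
  rcases le_total a b with h | h
  · rw [min_eq_left h, min_eq_left (max_le_max h le_rfl)]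
  · rw [min_eq_right h, min_eq_right (max_le_max h le_rfl)]

lemma pmax_max (a b : ℝ) : max (max a b) 0 = max (max a 0) (max b 0) := by
  rcases le_total a b with h | h
  · rw [max_eq_right h, max_eq_right (max_le_max h le_rfl)]
  · rw [max_eq_left h, max_eq_left (max_le_max h le_rfl)]

lemma pneg_min (a b : ℝ) : max (-(min a b)) 0 = max (max (-a) 0) (max (-b) 0) := by
  rcases le_total a b with h | h
  · rw [min_eq_left h, max_eq_left (max_le_max (neg_le_neg h) le_rfl)]
  · rw [min_eq_right h, max_eq_right (max_le_max (neg_le_neg h) le_rfl)]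

lemma pneg_max (a b : ℝ) : max (-(max a b)) 0 = min (max (-a) 0) (max (-b) 0) := by
  rcases le_total a b with h | h
  · rw [max_eq_right h, min_eq_right (max_le_max (neg_le_neg h) le_rfl)]
  · rw [max_eq_left h, min_eq_left (max_le_max (neg_le_neg h) le_rfl)]

lemma comonotone_neg {n : ℕ} {x y : Fin n → ℝ} (h : Comonotone x y) :
    Comonotone (fun i => -x i) (fun i => -y i) := by
  obtain ⟨σ, hx, hy⟩ := h
  refine ⟨Fin.revPerm.trans σ, ?_, ?_⟩ <;> intro p q hpq <;>
    simp only [Function.comp_apply, Equiv.trans_apply, Fin.revPerm_apply, neg_le_neg_iff]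
  · exact hx (Fin.rev_le_rev.mpr hpq)
  · exact hy (Fin.rev_le_rev.mpr hpq)


end ChoquetAux

theorem statement14 (n : ℕ) (hn : 0 < n) (I : Set ℝ) (hI : I.OrdConnected)
    (hsymm : ∀ x : ℝ, x ∈ I → -x ∈ I) (h11 : Set.Icc (-1 : ℝ) 1 ⊆ I)
    (f : (Fin n → ℝ) → ℝ) :
    IsSymSignedChoquetOn I f ↔
      (ComonModularOn I f ∧
        ∀ x ∈ I, ∀ S : Finset (Fin n), f (indTuple S x) = x * f (indTuple S 1)) := by
  have h0 : (0 : ℝ) ∈ I := h11 (by norm_num)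
  have h1I : (1 : ℝ) ∈ I := h11 (by norm_num)
  constructor
  · rintro ⟨v, hv0, hrep⟩
    constructor
    · -- comonotonic modularity
      intro x y hx hy hco
      obtain ⟨σ, hxσ, hyσ⟩ := hco
      set σ' : Equiv.Perm (Fin n) := Fin.revPerm.trans σ with hσ'
      have hxp : Monotone ((fun i => max (x i) 0) ∘ σ) :=
        fun p q h => max_le_max (hxσ h) le_rfl
      have hyp : Monotone ((fun i => max (y i) 0) ∘ σ) :=
        fun p q h => max_le_max (hyσ h) le_rfl
      have hxm : Monotone ((fun i => max (-x i) 0) ∘ σ') := by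
        intro p q h
        simp only [Function.comp_apply, hσ', Equiv.trans_apply, Fin.revPerm_apply]
        exact max_le_max (neg_le_neg (hxσ (Fin.rev_le_rev.mpr h))) le_rfl
      have hym : Monotone ((fun i => max (-y i) 0) ∘ σ') := by
        intro p q h
        simp only [Function.comp_apply, hσ', Equiv.trans_apply, Fin.revPerm_apply]
        exact max_le_max (neg_le_neg (hyσ (Fin.rev_le_rev.mpr h))) le_rfl
      have hmnI : ∀ i, min (x i) (y i) ∈ I := fun i => by
        rcases le_total (x i) (y i) with h | h
        · rw [min_eq_left h]; exact hx i
        · rw [min_eq_right h]; exact hy i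
      have hmxI : ∀ i, max (x i) (y i) ∈ I := fun i => by
        rcases le_total (x i) (y i) with h | h
        · rw [max_eq_right h]; exact hy i
        · rw [max_eq_left h]; exact hx i
      have HA := Cv_modular v hv0 (fun i => max (x i) 0) (fun i => max (y i) 0) σ hxp hyp
      have HB := Cv_modular v hv0 (fun i => max (-x i) 0) (fun i => max (-y i) 0) σ' hxm hym
      have e1 : (fun i => max (min (x i) (y i)) 0)
          = fun i => min (max (x i) 0) (max (y i) 0) := funext fun i => pmax_min _ _
      have e2 : (fun i => max (max (x i) (y i)) 0)
          = fun i => max (max (x i) 0) (max (y i) 0) := funext fun i => pmax_max _ _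
      have e3 : (fun i => max (-min (x i) (y i)) 0)
          = fun i => max (max (-x i) 0) (max (-y i) 0) := funext fun i => pneg_min _ _
      have e4 : (fun i => max (-max (x i) (y i)) 0)
          = fun i => min (max (-x i) 0) (max (-y i) 0) := funext fun i => pneg_max _ _
      rw [hrep x hx, hrep y hy, hrep _ hmnI, hrep _ hmxI, e1, e2, e3, e4]
      linarith
    · -- homogeneity on indicator tuples
      intro c hc S
      have hmem : ∀ t : ℝ, t ∈ I → ∀ i, indTuple S t i ∈ I := by
        intro t ht i
        by_cases h : i ∈ S <;> simp [indTuple, h, ht, h0]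
      have eplus : ∀ t : ℝ, (fun i => max (indTuple S t i) 0) = indTuple S (max t 0) := by
        intro t
        funext i
        by_cases h : i ∈ S <;> simp [indTuple, h]
      have eminus : ∀ t : ℝ, (fun i => max (-indTuple S t i) 0) = indTuple S (max (-t) 0) := by
        intro t
        funext i
        by_cases h : i ∈ S <;> simp [indTuple, h]
      have esmul : ∀ t : ℝ, indTuple S t = fun i => t * indTuple S 1 i := by
        intro t
        funext i
        by_cases h : i ∈ S <;> simp [indTuple, h]
      have hcv : ∀ t : ℝ, 0 ≤ t → Cv v (indTuple S t) = t * Cv v (indTuple S 1) := by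
        intro t ht
        rw [esmul t]
        exact Cv_smul v hv0 t ht _
      have hf1 : f (indTuple S 1) = Cv v (indTuple S 1) := by
        rw [hrep _ (hmem 1 h1I), eplus 1, eminus 1,
          max_eq_left zero_le_one, max_eq_right (by norm_num : (-1 : ℝ) ≤ 0),
          hcv 0 le_rfl]
        ring
      rw [hrep _ (hmem c hc), eplus c, eminus c, hcv _ (le_max_right c 0),
        hcv _ (le_max_right (-c) 0), hf1]
      rcases le_total c 0 with h | h
      · rw [max_eq_right h, max_eq_left (neg_nonneg.mpr h)]; ring
      · rw [max_eq_left h, max_eq_right (neg_nonpos.mpr h)]; ring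
  · rintro ⟨hmod, hhom⟩
    set v : Finset (Fin n) → ℝ := fun S => f (indTuple S 1) with hvdef
    have hv : ∀ c ∈ I, ∀ S : Finset (Fin n), f (indTuple S c) = c * v S :=
      fun c hc S => hhom c hc S
    have hv0 : v ∅ = 0 := by
      have h1 : indTuple (∅ : Finset (Fin n)) (1 : ℝ) = indTuple (∅ : Finset (Fin n)) (0 : ℝ) :=
        funext fun i => by simp [indTuple]
      calc v ∅ = f (indTuple (∅ : Finset (Fin n)) 1) := rfl
        _ = f (indTuple (∅ : Finset (Fin n)) 0) := by rw [h1]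
        _ = 0 * f (indTuple (∅ : Finset (Fin n)) 1) := hhom 0 h0 ∅
        _ = 0 := zero_mul _
    refine ⟨v, hv0, ?_⟩
    intro x hx
    have hxpI : ∀ i, max (x i) 0 ∈ I := fun i => by
      rcases le_total (x i) 0 with h | h
      · rw [max_eq_right h]; exact h0
      · rw [max_eq_left h]; exact hx i
    have hxmI : ∀ i, max (-x i) 0 ∈ I := fun i => by
      rcases le_total (x i) 0 with h | h
      · rw [max_eq_left (neg_nonneg.mpr h)]; exact hsymm _ (hx i)
      · rw [max_eq_right (neg_nonpos.mpr h)]; exact h0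
    have hsplit : f x = f (fun i => max (x i) 0) + f (fun i => min (x i) 0) := by
      have hco : Comonotone x (indTuple Finset.univ 0) :=
        ⟨Tuple.sort x, Tuple.monotone_sort x, fun p q h => by simp [indTuple]⟩
      have hmem0 : ∀ i, indTuple (Finset.univ : Finset (Fin n)) (0 : ℝ) i ∈ I := fun i => by
        simp [indTuple, h0]
      have h := hmod x (indTuple Finset.univ 0) hx hmem0 hco
      have e0 : (fun i => min (x i) (indTuple Finset.univ 0 i)) = fun i => min (x i) 0 :=
        funext fun i => by simp [indTuple]
      have e0' : (fun i => max (x i) (indTuple Finset.univ 0 i)) = fun i => max (x i) 0 :=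
        funext fun i => by simp [indTuple]
      have hfz : f (indTuple Finset.univ 0) = 0 := by rw [hv 0 h0]; ring
      rw [e0, e0', hfz] at h
      linarith
    have hkey1 : f (fun i => max (x i) 0) = Cv v (fun i => max (x i) 0) :=
      key hn I h0 f v hmod hv hv0 _ hxpI (fun i => le_max_right _ _)
    set F : (Fin n → ℝ) → ℝ := fun z => -f (fun i => -z i) with hFdef
    have hmodF : ComonModularOn I F := by
      intro p q hp hq hco
      have hnp : ∀ i, -p i ∈ I := fun i => hsymm _ (hp i)
      have hnq : ∀ i, -q i ∈ I := fun i => hsymm _ (hq i)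
      have h := hmod (fun i => -p i) (fun i => -q i) hnp hnq (comonotone_neg hco)
      have e1 : (fun i => min (-p i) (-q i)) = fun i => -max (p i) (q i) :=
        funext fun i => min_neg_neg _ _
      have e2 : (fun i => max (-p i) (-q i)) = fun i => -min (p i) (q i) :=
        funext fun i => max_neg_neg _ _
      rw [e1, e2] at h
      show F p + F q = F (fun i => min (p i) (q i)) + F (fun i => max (p i) (q i))
      rw [hFdef]
      simp only
      linarith
    have hvF : ∀ c ∈ I, ∀ S : Finset (Fin n), F (indTuple S c) = c * v S := by
      intro c hc S
      have e : (fun i => -indTuple S c i) = indTuple S (-c) := by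
        funext i
        by_cases h : i ∈ S <;> simp [indTuple, h]
      rw [hFdef]
      simp only
      rw [e, hv (-c) (hsymm _ hc) S]
      ring
    have hkey2 : F (fun i => max (-x i) 0) = Cv v (fun i => max (-x i) 0) :=
      key hn I h0 F v hmodF hvF hv0 _ hxmI (fun i => le_max_right _ _)
    have hFx : F (fun i => max (-x i) 0) = -f (fun i => min (x i) 0) := by
      rw [hFdef]
      simp only
      congr 2
      funext i
      rcases le_total (x i) 0 with h | h
      · rw [max_eq_left (neg_nonneg.mpr h), min_eq_left h, neg_neg]
      · rw [max_eq_right (neg_nonpos.mpr h), min_eq_right h, neg_zero]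
    have hmin : f (fun i => min (x i) 0) = -Cv v (fun i => max (-x i) 0) := by
      rw [← hkey2, hFx]; ring
    rw [hsplit, hkey1, hmin]
    ring
end

section
/- Assume [0,1] ⊆ I ⊆ ℝ₊ and let f : Iⁿ → ℝ be a nonconstant function with f(0) = 0. The following are equivalent: (i) f is a signed quasi-Choquet integral and there exists S ⊆ X with f(1_S) ≠ 0; (ii) f is comonotonically modular (equivalently, invariant under horizontal min-differences) and there exists a nondecreasing function φ : I → ℝ with φ(0) = 0 such that f(x·1_S) = sign(x)·φ(x)·f(sign(x)·1_S) for every x ∈ I and every S ⊆ X. -/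
section Aux

open Finset

variable {n : ℕ}

lemma mem_SUp {σ : Equiv.Perm (Fin n)} {i : ℕ} {j : Fin n} :
    j ∈ SUp σ i ↔ i ≤ (σ.symm j : ℕ) := by
  simp only [SUp, mem_image, mem_filter, mem_univ, true_and]
  constructor
  · rintro ⟨k, hk, rfl⟩; simpa using hk
  · intro h; exact ⟨σ.symm j, h, σ.apply_symm_apply j⟩

lemma SUp_of_le {σ : Equiv.Perm (Fin n)} {i : ℕ} (h : n ≤ i) : SUp σ i = ∅ := by
  ext j
  simp only [mem_SUp, Finset.notMem_empty, iff_false]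
  have := (σ.symm j).isLt
  omega

lemma sum_fin_eq (u : Fin n → ℝ) (σ : Equiv.Perm (Fin n)) (v : Finset (Fin n) → ℝ) :
    ∑ i : Fin n, u (σ i) * (v (SUp σ (i : ℕ)) - v (SUp σ ((i : ℕ) + 1))) =
    ∑ i ∈ Finset.range n,
      (if h : i < n then u (σ ⟨i, h⟩) else 0) * (v (SUp σ i) - v (SUp σ (i + 1))) := by
  refine Eq.trans (Finset.sum_congr rfl fun i _ => ?_)
    (Fin.sum_univ_eq_sum_range
      (fun i => (if h : i < n then u (σ ⟨i, h⟩) else 0) * (v (SUp σ i) - v (SUp σ (i + 1)))) n)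
  rw [dif_pos i.isLt]

lemma abel_sum (a G : ℕ → ℝ) (n : ℕ) :
    ∑ i ∈ Finset.range n, a i * (G i - G (i + 1)) =
      a 0 * G 0 - a n * G n + ∑ i ∈ Finset.range n, (a (i + 1) - a i) * G (i + 1) := by
  induction n with
  | zero => simp
  | succ m ih => rw [Finset.sum_range_succ, Finset.sum_range_succ, ih]; ring

lemma SUp_eq_filter {u : Fin n → ℝ} {σ : Equiv.Perm (Fin n)} (hσ : Monotone (u ∘ σ))
    {i : ℕ} (hi : i < n)
    (hlt : ∀ k : Fin n, (k : ℕ) < i → u (σ k) < u (σ ⟨i, hi⟩)) :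
    SUp σ i = Finset.univ.filter (fun j => u (σ ⟨i, hi⟩) ≤ u j) := by
  classical
  ext j
  simp only [mem_SUp, mem_filter, mem_univ, true_and]
  constructor
  · intro h
    have : u (σ ⟨i, hi⟩) ≤ u (σ (σ.symm j)) := hσ (show (⟨i, hi⟩ : Fin n) ≤ σ.symm j from h)
    simpa using this
  · intro h
    by_contra hc
    push_neg at hc
    have := hlt (σ.symm j) hc
    rw [Equiv.apply_symm_apply] at this
    linarith

lemma sum_sorted_eq (v : Finset (Fin n) → ℝ) (u : Fin n → ℝ)
    {σ τ : Equiv.Perm (Fin n)} (hσ : Monotone (u ∘ σ)) (hτ : Monotone (u ∘ τ)) :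
    ∑ i : Fin n, u (σ i) * (v (SUp σ (i : ℕ)) - v (SUp σ ((i : ℕ) + 1))) =
    ∑ i : Fin n, u (τ i) * (v (SUp τ (i : ℕ)) - v (SUp τ ((i : ℕ) + 1))) := by
  classical
  have hcomp : u ∘ σ = u ∘ τ :=
    (Tuple.comp_sort_eq_comp_iff_monotone.mpr hσ).trans
      (Tuple.comp_sort_eq_comp_iff_monotone.mpr hτ).symm
  set a : ℕ → ℝ := fun i => if h : i < n then u (σ ⟨i, h⟩) else 0 with ha
  have haτ : ∀ i : ℕ, (if h : i < n then u (τ ⟨i, h⟩) else 0) = a i := by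
    intro i
    by_cases h : i < n
    · simp only [ha, dif_pos h]
      exact (congrFun hcomp ⟨i, h⟩).symm
    · simp [ha, h]
  rw [sum_fin_eq u σ v, sum_fin_eq u τ v]
  have hτ' : ∑ i ∈ Finset.range n,
      (if h : i < n then u (τ ⟨i, h⟩) else 0) * (v (SUp τ i) - v (SUp τ (i + 1))) =
      ∑ i ∈ Finset.range n, a i * (v (SUp τ i) - v (SUp τ (i + 1))) :=
    Finset.sum_congr rfl fun i _ => by rw [haτ]
  rw [hτ', abel_sum, abel_sum]
  have h0 : SUp σ 0 = SUp τ 0 := by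
    ext j; simp [mem_SUp]
  have hn' : SUp σ n = SUp τ n := by rw [SUp_of_le le_rfl, SUp_of_le le_rfl]
  have hsum : ∑ i ∈ Finset.range n, (a (i + 1) - a i) * v (SUp σ (i + 1)) =
      ∑ i ∈ Finset.range n, (a (i + 1) - a i) * v (SUp τ (i + 1)) := by
    refine Finset.sum_congr rfl fun i hi => ?_
    have hin : i < n := Finset.mem_range.mp hi
    by_cases hd : a (i + 1) = a i
    · rw [hd]; ring
    · by_cases hi1 : i + 1 < n
      · -- strict increase at i+1
        have hai : a i = u (σ ⟨i, hin⟩) := by rw [ha]; simp [hin]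
        have hai1 : a (i + 1) = u (σ ⟨i + 1, hi1⟩) := by rw [ha]; simp [hi1]
        have hmono_le : u (σ ⟨i, hin⟩) ≤ u (σ ⟨i + 1, hi1⟩) :=
          hσ (show (⟨i, hin⟩ : Fin n) ≤ ⟨i + 1, hi1⟩ by simp [Fin.le_def])
        have hstrict : u (σ ⟨i, hin⟩) < u (σ ⟨i + 1, hi1⟩) := by
          rcases lt_or_eq_of_le hmono_le with h | h
          · exact h
          · exact absurd (by rw [hai1, hai, h]) hd
        have hltσ : ∀ k : Fin n, (k : ℕ) < i + 1 → u (σ k) < u (σ ⟨i + 1, hi1⟩) := by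
          intro k hk
          have : u (σ k) ≤ u (σ ⟨i, hin⟩) :=
            hσ (show k ≤ (⟨i, hin⟩ : Fin n) by simp [Fin.le_def]; omega)
          linarith
        have hcompτ : ∀ k : Fin n, u (τ k) = u (σ k) := fun k => (congrFun hcomp k).symm
        have hltτ : ∀ k : Fin n, (k : ℕ) < i + 1 → u (τ k) < u (τ ⟨i + 1, hi1⟩) := by
          intro k hk
          rw [hcompτ, hcompτ]
          exact hltσ k hk
        rw [SUp_eq_filter hσ hi1 hltσ, SUp_eq_filter hτ hi1 hltτ, hcompτ]
      · -- i + 1 = n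
        have : i + 1 = n := by omega
        rw [this, hn']
  rw [h0, hn', hsum]

end Aux
section Aux2

open Finset

variable {n : ℕ}

lemma Cv_eq_of_monotone (v : Finset (Fin n) → ℝ) (u : Fin n → ℝ)
    {σ : Equiv.Perm (Fin n)} (hσ : Monotone (u ∘ σ)) :
    Cv v u = ∑ i : Fin n, u (σ i) * (v (SUp σ (i : ℕ)) - v (SUp σ ((i : ℕ) + 1))) :=
  sum_sorted_eq v u (Tuple.monotone_sort u) hσ

lemma upper_eq {x : Fin n → ℝ} {σ : Equiv.Perm (Fin n)} (hσ : Monotone (x ∘ σ))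
    (p : ℝ → Prop) [DecidablePred p] (hp : ∀ s t : ℝ, s ≤ t → p s → p t) :
    Finset.univ.filter (fun k : Fin n => p (x (σ k))) =
      Finset.univ.filter
        (fun k : Fin n =>
          n - (Finset.univ.filter (fun k : Fin n => p (x (σ k)))).card ≤ (k : ℕ)) := by
  classical
  set U := Finset.univ.filter (fun k : Fin n => p (x (σ k))) with hU
  set c := U.card with hc
  have hcn : c ≤ n := by
    have := Finset.card_le_univ U
    simpa [hc] using this
  have hsub : U ⊆ Finset.univ.filter (fun k : Fin n => n - c ≤ (k : ℕ)) := by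
    intro k hk
    have hIci : Finset.Ici k ⊆ U := by
      intro j hj
      simp only [hU, Finset.mem_filter, Finset.mem_univ, true_and] at hk ⊢
      exact hp _ _ (hσ (Finset.mem_Ici.mp hj)) hk
    have hcard : n - (k : ℕ) ≤ c := by
      have h1 := Finset.card_le_card hIci
      rwa [Fin.card_Ici] at h1
    simp only [Finset.mem_filter, Finset.mem_univ, true_and]
    omega
  have hcardF : (Finset.univ.filter (fun k : Fin n => n - c ≤ (k : ℕ))).card = c := by
    rcases Nat.eq_zero_or_pos c with h0 | hpos
    · have hempty : Finset.univ.filter (fun k : Fin n => n - c ≤ (k : ℕ)) = ∅ := by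
        rw [Finset.filter_eq_empty_iff]
        intro k _
        have := k.isLt
        omega
      rw [hempty, h0]
      rfl
    · have hlt : n - c < n := by omega
      have hIci : Finset.univ.filter (fun k : Fin n => n - c ≤ (k : ℕ)) =
          Finset.Ici (⟨n - c, hlt⟩ : Fin n) := by
        ext k
        simp [Finset.mem_Ici, Fin.le_def]
      rw [hIci, Fin.card_Ici]
      simp only [Fin.val_mk]
      omega
  exact Finset.eq_of_subset_of_card_le hsub (by rw [hcardF])

lemma SUp_filter_eq {x : Fin n → ℝ} {σ : Equiv.Perm (Fin n)} (hσ : Monotone (x ∘ σ))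
    (p : ℝ → Prop) [DecidablePred p] (hp : ∀ s t : ℝ, s ≤ t → p s → p t) :
    SUp σ (n - (Finset.univ.filter (fun k : Fin n => p (x (σ k)))).card) =
      Finset.univ.filter (fun j => p (x j)) := by
  classical
  have h := upper_eq hσ p hp
  have himg : SUp σ (n - (Finset.univ.filter (fun k : Fin n => p (x (σ k)))).card) =
      (Finset.univ.filter (fun k : Fin n => p (x (σ k)))).image σ := by
    rw [SUp]
    congr 1
    exact h.symm
  rw [himg]
  ext j
  simp only [Finset.mem_image, Finset.mem_filter, Finset.mem_univ, true_and]
  constructor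
  · rintro ⟨k, hk, rfl⟩; exact hk
  · intro hj
    exact ⟨σ.symm j, by rw [Equiv.apply_symm_apply]; exact hj, σ.apply_symm_apply j⟩

lemma teleIco (G : ℕ → ℝ) {c1 c2 : ℕ} (h : c1 ≤ c2) :
    ∑ i ∈ Finset.Ico c1 c2, (G i - G (i + 1)) = G c1 - G c2 := by
  rw [Finset.sum_Ico_eq_sub _ h, Finset.sum_range_sub' G, Finset.sum_range_sub' G]
  ring

lemma sum_ite_tele (G : ℕ → ℝ) (c1 c2 : ℕ) (h12 : c1 ≤ c2) (h2 : c2 ≤ n) :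
    ∑ k : Fin n, (if c1 ≤ (k : ℕ) ∧ (k : ℕ) < c2 then G (k : ℕ) - G ((k : ℕ) + 1) else 0)
      = G c1 - G c2 := by
  classical
  rw [Fin.sum_univ_eq_sum_range (fun i => if c1 ≤ i ∧ i < c2 then G i - G (i + 1) else 0) n]
  rw [← Finset.sum_filter]
  have hf : (Finset.range n).filter (fun i => c1 ≤ i ∧ i < c2) = Finset.Ico c1 c2 := by
    ext i
    simp only [Finset.mem_filter, Finset.mem_range, Finset.mem_Ico]
    omega
  rw [hf, teleIco G h12]

lemma Cv_indTuple (v : Finset (Fin n) → ℝ) (h0 : v ∅ = 0) {S : Finset (Fin n)} {c : ℝ}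
    (hc : 0 ≤ c) : Cv v (indTuple S c) = c * v S := by
  classical
  rcases hc.eq_or_lt with rfl | hpos
  · simp [Cv, indTuple]
  · set z := indTuple S c with hz
    set τ := Tuple.sort z with hτdef
    have hτ : Monotone (z ∘ τ) := Tuple.monotone_sort z
    have hp : ∀ s t : ℝ, s ≤ t → 0 < s → 0 < t := fun s t h hs => lt_of_lt_of_le hs h
    set U := Finset.univ.filter (fun k : Fin n => 0 < z (τ k)) with hU
    have hUeq : U = Finset.univ.filter (fun k : Fin n => n - U.card ≤ (k : ℕ)) :=
      upper_eq hτ (fun t => 0 < t) hp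
    have hSUp : SUp τ (n - U.card) = Finset.univ.filter (fun j => 0 < z j) :=
      SUp_filter_eq hτ (fun t => 0 < t) hp
    have hzS : Finset.univ.filter (fun j => 0 < z j) = S := by
      ext j
      simp only [Finset.mem_filter, Finset.mem_univ, true_and, hz, indTuple]
      by_cases h : j ∈ S <;> simp [h, hpos]
    have hCv : Cv v z =
        ∑ k : Fin n, z (τ k) * (v (SUp τ (k : ℕ)) - v (SUp τ ((k : ℕ) + 1))) := rfl
    rw [hCv]
    have hterm : ∀ k : Fin n,
        z (τ k) * (v (SUp τ (k : ℕ)) - v (SUp τ ((k : ℕ) + 1))) =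
        c * (if n - U.card ≤ (k : ℕ) ∧ (k : ℕ) < n then
          (fun i => v (SUp τ i)) (k : ℕ) - (fun i => v (SUp τ i)) ((k : ℕ) + 1) else 0) := by
      intro k
      by_cases hk : 0 < z (τ k)
      · have hkU : k ∈ U := by simp [hU, hk]
        have hkle : n - U.card ≤ (k : ℕ) := by
          rw [hUeq] at hkU
          simpa using hkU
        have hzc : z (τ k) = c := by
          rw [hz]
          simp only [indTuple]
          by_cases h : τ k ∈ S
          · simp [h]
          · exfalso
            rw [hz] at hk
            simp [indTuple, h] at hk
        rw [if_pos ⟨hkle, k.isLt⟩, hzc]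
      · have hz0 : z (τ k) = 0 := by
          rw [hz] at hk ⊢
          simp only [indTuple] at hk ⊢
          by_cases h : τ k ∈ S
          · simp [h] at hk; linarith
          · simp [h]
        have hkU : k ∉ U := by simp [hU, hk]
        have hkle : ¬ (n - U.card ≤ (k : ℕ)) := by
          rw [hUeq] at hkU
          simpa using hkU
        rw [if_neg (by tauto), hz0, zero_mul, mul_zero]
    rw [Finset.sum_congr rfl fun k _ => hterm k, ← Finset.mul_sum]
    rw [sum_ite_tele (fun i => v (SUp τ i)) (n - U.card) n (Nat.sub_le n _) le_rfl]
    rw [SUp_of_le le_rfl, h0, hSUp, hzS]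
    ring

end Aux2
section Aux3

open Finset

variable {n : ℕ}

lemma repr_of_modular {I : Set ℝ} (h0I : (0 : ℝ) ∈ I) (hIpos : I ⊆ Set.Ici 0)
    {f : (Fin n → ℝ) → ℝ} (hf0 : f (fun _ => 0) = 0) (hmod : ComonModularOn I f)
    (φ : ℝ → ℝ) (v : Finset (Fin n) → ℝ)
    (hv : ∀ a ∈ I, ∀ T : Finset (Fin n), f (indTuple T a) = φ a * v T)
    {x : Fin n → ℝ} (hx : ∀ i, x i ∈ I) {σ : Equiv.Perm (Fin n)} (hσ : Monotone (x ∘ σ)) :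
    f x = ∑ i : Fin n, φ (x (σ i)) * (v (SUp σ (i : ℕ)) - v (SUp σ ((i : ℕ) + 1))) := by
  classical
  have hxpos : ∀ i, (0 : ℝ) ≤ x i := fun i => hIpos (hx i)
  set X : ℕ → (Fin n → ℝ) := fun k j => if k ≤ (σ.symm j : ℕ) then x j else 0 with hX
  have hX0 : X 0 = x := funext fun j => if_pos (Nat.zero_le _)
  have hXn : X n = fun _ => 0 := funext fun j => if_neg (by
    have := (σ.symm j).isLt; omega)
  have hXI : ∀ k, ∀ i, X k i ∈ I := by
    intro k i
    rw [hX]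
    dsimp only
    split
    · exact hx i
    · exact h0I
  have step : ∀ k, (hk : k < n) →
      f (X k) - f (X (k + 1)) =
        f (indTuple (SUp σ k) (x (σ ⟨k, hk⟩))) - f (indTuple (SUp σ (k + 1)) (x (σ ⟨k, hk⟩))) := by
    intro k hk
    set a := x (σ ⟨k, hk⟩) with hadef
    have haI : a ∈ I := hx _
    have ha0 : (0 : ℝ) ≤ a := hIpos haI
    have hindI : ∀ i, indTuple (SUp σ k) a i ∈ I := by
      intro i
      rw [indTuple]
      split
      · exact haI
      · exact h0I
    have hm1 : Monotone (X (k + 1) ∘ σ) := by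
      intro i j hij
      simp only [Function.comp_apply, hX, Equiv.symm_apply_apply]
      by_cases h1 : k + 1 ≤ (i : ℕ)
      · rw [if_pos h1, if_pos (le_trans h1 hij)]
        exact hσ hij
      · rw [if_neg h1]
        split
        · exact hxpos _
        · exact le_refl 0
    have hm2 : Monotone (indTuple (SUp σ k) a ∘ σ) := by
      intro i j hij
      simp only [Function.comp_apply, indTuple, mem_SUp, Equiv.symm_apply_apply]
      by_cases h1 : k ≤ (i : ℕ)
      · rw [if_pos h1, if_pos (le_trans h1 hij)]
      · rw [if_neg h1]
        split
        · exact ha0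
        · exact le_refl 0
    have key := hmod (X (k + 1)) (indTuple (SUp σ k) a) (hXI (k + 1)) hindI ⟨σ, hm1, hm2⟩
    have hmin : (fun i => min (X (k + 1) i) (indTuple (SUp σ k) a i)) =
        indTuple (SUp σ (k + 1)) a := by
      funext j
      simp only [hX, indTuple, mem_SUp]
      by_cases h1 : k + 1 ≤ (σ.symm j : ℕ)
      · have h2 : k ≤ (σ.symm j : ℕ) := by omega
        have hax : a ≤ x j := by
          have := hσ (show (⟨k, hk⟩ : Fin n) ≤ σ.symm j from h1.trans' (Nat.le_succ k))
          simpa [Equiv.apply_symm_apply] using this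
        rw [if_pos h1, if_pos h2, if_pos h1, min_eq_right hax]
      · by_cases h2 : k ≤ (σ.symm j : ℕ)
        · rw [if_neg h1, if_pos h2, if_neg h1, min_eq_left ha0]
        · rw [if_neg h1, if_neg h2, if_neg h1, min_self]
    have hmax : (fun i => max (X (k + 1) i) (indTuple (SUp σ k) a i)) = X k := by
      funext j
      simp only [hX, indTuple, mem_SUp]
      by_cases h1 : k + 1 ≤ (σ.symm j : ℕ)
      · have h2 : k ≤ (σ.symm j : ℕ) := by omega
        have hax : a ≤ x j := by
          have := hσ (show (⟨k, hk⟩ : Fin n) ≤ σ.symm j from h1.trans' (Nat.le_succ k))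
          simpa [Equiv.apply_symm_apply] using this
        rw [if_pos h1, if_pos h2, if_pos h2, max_eq_left hax]
      · by_cases h2 : k ≤ (σ.symm j : ℕ)
        · have hm : (σ.symm j : ℕ) = k := by omega
          have hjk : σ.symm j = (⟨k, hk⟩ : Fin n) := Fin.ext hm
          have hxa : x j = a := by
            rw [hadef, ← hjk, Equiv.apply_symm_apply]
          rw [if_neg h1, if_pos h2, if_pos h2, max_eq_right ha0, hxa]
        · rw [if_neg h1, if_neg h2, if_neg h2, max_self]
    rw [hmin, hmax] at key
    linarith
  have htel : f x = ∑ k ∈ Finset.range n, (f (X k) - f (X (k + 1))) := by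
    rw [Finset.sum_range_sub' (fun k => f (X k)) n, hX0, hXn, hf0, sub_zero]
  rw [htel]
  have hstep2 : ∀ k ∈ Finset.range n,
      f (X k) - f (X (k + 1)) =
        (if h : k < n then φ (x (σ ⟨k, h⟩)) else 0) * (v (SUp σ k) - v (SUp σ (k + 1))) := by
    intro k hk
    have hkn : k < n := Finset.mem_range.mp hk
    rw [step k hkn, hv _ (hx _) _, hv _ (hx _) _, dif_pos hkn]
    ring
  rw [Finset.sum_congr rfl hstep2]
  exact (sum_fin_eq (fun j => φ (x j)) σ v).symm

end Aux3
section Aux4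

open Finset

variable {n : ℕ}

lemma repr_of_inv {I : Set ℝ} (h0I : (0 : ℝ) ∈ I) (hIpos : I ⊆ Set.Ici 0)
    {f : (Fin n → ℝ) → ℝ} (hf0 : f (fun _ => 0) = 0) (hinv : InvHMinDiffOn I f)
    (φ : ℝ → ℝ) (hφ0 : φ 0 = 0) (v : Finset (Fin n) → ℝ)
    (hv : ∀ a ∈ I, ∀ T : Finset (Fin n), f (indTuple T a) = φ a * v T) :
    ∀ (m : ℕ) (x : Fin n → ℝ), (∀ i, x i ∈ I) →
      ((Finset.univ.image x).filter (fun t => 0 < t)).card ≤ m →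
      ∀ σ : Equiv.Perm (Fin n), Monotone (x ∘ σ) →
      f x = ∑ i : Fin n, φ (x (σ i)) * (v (SUp σ (i : ℕ)) - v (SUp σ ((i : ℕ) + 1))) := by
  classical
  intro m
  induction m with
  | zero =>
    intro x hx hcard σ hσ
    have hx0 : ∀ i, x i = 0 := by
      intro i
      refine le_antisymm ?_ (hIpos (hx i))
      by_contra hc
      push_neg at hc
      have hmem : x i ∈ (Finset.univ.image x).filter (fun t => 0 < t) := by
        simp only [Finset.mem_filter, Finset.mem_image, Finset.mem_univ, true_and]
        exact ⟨⟨i, rfl⟩, hc⟩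
      have := Finset.card_pos.mpr ⟨x i, hmem⟩
      omega
    have hxz : x = fun _ => 0 := funext hx0
    rw [hxz, hf0]
    symm
    refine Finset.sum_eq_zero fun i _ => ?_
    simp [hφ0]
  | succ m ih =>
    intro x hx hcard σ hσ
    rcases Nat.lt_or_ge (((Finset.univ.image x).filter (fun t => 0 < t)).card) (m + 1)
      with hlt | hge
    · exact ih x hx (by omega) σ hσ
    · have hne : ((Finset.univ.image x).filter (fun t => 0 < t)).Nonempty := by
        rw [← Finset.card_pos]; omega
      set a := ((Finset.univ.image x).filter (fun t => 0 < t)).min' hne with hadef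
      have haS : a ∈ (Finset.univ.image x).filter (fun t => 0 < t) := Finset.min'_mem _ hne
      have hamem : ∃ i0, x i0 = a := by
        have := (Finset.mem_filter.mp haS).1
        simpa [Finset.mem_image] using this
      have hapos : 0 < a := (Finset.mem_filter.mp haS).2
      obtain ⟨i0, hi0⟩ := hamem
      have haI : a ∈ I := hi0 ▸ hx i0
      have hmin_le : ∀ i, 0 < x i → a ≤ x i := by
        intro i h
        refine Finset.min'_le _ _ ?_
        simp only [Finset.mem_filter, Finset.mem_image, Finset.mem_univ, true_and]
        exact ⟨⟨i, rfl⟩, h⟩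
      set x' : Fin n → ℝ := fun i => if x i ≤ a then 0 else x i with hx'def
      have hx'I : ∀ i, x' i ∈ I := by
        intro i
        rw [hx'def]
        dsimp only
        split
        · exact h0I
        · exact hx i
      have key := hinv x hx a haI
      -- identify the two min-tuples
      have hmin1 : (fun i => min (x i) a) =
          indTuple (Finset.univ.filter (fun j => 0 < x j)) a := by
        funext i
        simp only [indTuple, Finset.mem_filter, Finset.mem_univ, true_and]
        by_cases h : 0 < x i
        · rw [if_pos h, min_eq_right (hmin_le i h)]
        · have hxi : x i = 0 := le_antisymm (not_lt.mp h) (hIpos (hx i))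
          rw [if_neg h, hxi, min_eq_left hapos.le]
      have hmin2 : (fun i => min (if x i ≤ a then 0 else x i) a) =
          indTuple (Finset.univ.filter (fun j => a < x j)) a := by
        funext i
        simp only [indTuple, Finset.mem_filter, Finset.mem_univ, true_and]
        by_cases h : x i ≤ a
        · rw [if_pos h, if_neg (not_lt.mpr h), min_eq_left hapos.le]
        · rw [if_neg h, if_pos (not_le.mp h), min_eq_right (not_le.mp h).le]
      rw [hmin1, hmin2] at key
      rw [hv a haI, hv a haI] at key
      -- measure decreases
      have hset : (Finset.univ.image x').filter (fun t => 0 < t) =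
          ((Finset.univ.image x).filter (fun t => 0 < t)).erase a := by
        ext t
        simp only [Finset.mem_erase, Finset.mem_filter, Finset.mem_image, Finset.mem_univ,
          true_and]
        constructor
        · rintro ⟨⟨i, rfl⟩, ht⟩
          rw [hx'def] at ht ⊢
          dsimp only at ht ⊢
          by_cases h : x i ≤ a
          · rw [if_pos h] at ht; exact absurd ht (lt_irrefl 0)
          · rw [if_neg h] at ht ⊢
            exact ⟨by intro hh; exact h (le_of_eq hh), ⟨i, rfl⟩, ht⟩
        · rintro ⟨hta, ⟨i, rfl⟩, ht⟩
          have hax : a < x i := lt_of_le_of_ne (hmin_le i ht) (Ne.symm hta)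
          refine ⟨⟨i, ?_⟩, ht⟩
          rw [hx'def]
          dsimp only
          rw [if_neg (not_le.mpr hax)]
      have hcard' : ((Finset.univ.image x').filter (fun t => 0 < t)).card ≤ m := by
        rw [hset, Finset.card_erase_of_mem haS]
        omega
      have hσ' : Monotone (x' ∘ σ) := by
        intro i j hij
        simp only [Function.comp_apply, hx'def]
        by_cases h1 : x (σ i) ≤ a
        · rw [if_pos h1]
          split
          · exact le_refl 0
          · exact le_of_lt (lt_trans hapos (not_le.mp (by assumption)))
        · have h2 : ¬ x (σ j) ≤ a := by
            intro hc
            exact h1 (le_trans (hσ hij) hc)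
          rw [if_neg h1, if_neg h2]
          exact hσ hij
      have hIH := ih x' hx'I hcard' σ hσ'
      rw [hIH] at key
      -- now the sum manipulation
      set P' := Finset.univ.filter (fun k : Fin n => 0 < x (σ k)) with hP'
      set T' := Finset.univ.filter (fun k : Fin n => a < x (σ k)) with hT'
      have hpP : ∀ s t : ℝ, s ≤ t → 0 < s → 0 < t := fun s t h hs => lt_of_lt_of_le hs h
      have hpT : ∀ s t : ℝ, s ≤ t → a < s → a < t := fun s t h hs => lt_of_lt_of_le hs h
      have hPeq : P' = Finset.univ.filter (fun k : Fin n => n - P'.card ≤ (k : ℕ)) :=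
        upper_eq hσ (fun t => 0 < t) hpP
      have hTeq : T' = Finset.univ.filter (fun k : Fin n => n - T'.card ≤ (k : ℕ)) :=
        upper_eq hσ (fun t => a < t) hpT
      have hSP : SUp σ (n - P'.card) = Finset.univ.filter (fun j => 0 < x j) :=
        SUp_filter_eq hσ (fun t => 0 < t) hpP
      have hST : SUp σ (n - T'.card) = Finset.univ.filter (fun j => a < x j) :=
        SUp_filter_eq hσ (fun t => a < t) hpT
      have hTsubP : T' ⊆ P' := by
        intro k hk
        simp only [hT', hP', Finset.mem_filter, Finset.mem_univ, true_and] at hk ⊢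
        exact lt_trans hapos hk
      have hcle : T'.card ≤ P'.card := Finset.card_le_card hTsubP
      have hdiff : ∑ i : Fin n, φ (x (σ i)) * (v (SUp σ (i : ℕ)) - v (SUp σ ((i : ℕ) + 1)))
          - ∑ i : Fin n, φ (x' (σ i)) * (v (SUp σ (i : ℕ)) - v (SUp σ ((i : ℕ) + 1)))
          = φ a * (v (Finset.univ.filter (fun j => 0 < x j))
              - v (Finset.univ.filter (fun j => a < x j))) := by
        rw [← Finset.sum_sub_distrib]
        have hterm : ∀ k : Fin n,
            φ (x (σ k)) * (v (SUp σ (k : ℕ)) - v (SUp σ ((k : ℕ) + 1)))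
            - φ (x' (σ k)) * (v (SUp σ (k : ℕ)) - v (SUp σ ((k : ℕ) + 1)))
            = φ a * (if n - P'.card ≤ (k : ℕ) ∧ (k : ℕ) < n - T'.card then
                (fun i => v (SUp σ i)) (k : ℕ) - (fun i => v (SUp σ i)) ((k : ℕ) + 1)
              else 0) := by
          intro k
          by_cases h1 : 0 < x (σ k)
          · by_cases h2 : a < x (σ k)
            · have hx'k : x' (σ k) = x (σ k) := by
                rw [hx'def]; dsimp only; rw [if_neg (not_le.mpr h2)]
              have hkT : k ∈ T' := by simp [hT', h2]
              have hkge : n - T'.card ≤ (k : ℕ) := by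
                rw [hTeq] at hkT; simpa using hkT
              rw [hx'k, if_neg (by omega), mul_zero, sub_self]
            · have hxa : x (σ k) = a := le_antisymm (not_lt.mp h2) (hmin_le _ h1)
              have hx'k : x' (σ k) = 0 := by
                rw [hx'def]; dsimp only; rw [if_pos (not_lt.mp h2)]
              have hkP : k ∈ P' := by simp [hP', h1]
              have hkT : k ∉ T' := by simp [hT', h2]
              have hkge : n - P'.card ≤ (k : ℕ) := by
                rw [hPeq] at hkP; simpa using hkP
              have hklt : ¬ (n - T'.card ≤ (k : ℕ)) := by
                rw [hTeq] at hkT; simpa using hkT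
              rw [hxa, hx'k, hφ0, zero_mul, sub_zero, if_pos ⟨hkge, by omega⟩]
          · have hxk : x (σ k) = 0 := le_antisymm (not_lt.mp h1) (hIpos (hx _))
            have hx'k : x' (σ k) = 0 := by
              rw [hx'def]; dsimp only; rw [if_pos (by rw [hxk]; exact hapos.le)]
            have hkP : k ∉ P' := by simp [hP', h1]
            have hkge : ¬ (n - P'.card ≤ (k : ℕ)) := by
              rw [hPeq] at hkP; simpa using hkP
            rw [hxk, hx'k, if_neg (by tauto), mul_zero, sub_self]
        rw [Finset.sum_congr rfl fun k _ => hterm k, ← Finset.mul_sum]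
        rw [sum_ite_tele (fun i => v (SUp σ i)) (n - P'.card) (n - T'.card)
          (by omega) (by omega)]
        rw [hSP, hST]
      linarith
end Aux4
theorem statement15 (n : ℕ) (hn : 0 < n) (I : Set ℝ) (hI : I.OrdConnected)
    (hIcc : Set.Icc (0 : ℝ) 1 ⊆ I) (hIpos : I ⊆ Set.Ici 0)
    (f : (Fin n → ℝ) → ℝ)
    (hnc : ∃ x y : Fin n → ℝ, (∀ i, x i ∈ I) ∧ (∀ i, y i ∈ I) ∧ f x ≠ f y)
    (hf0 : f (fun _ => 0) = 0) :
    ((∃ v : Finset (Fin n) → ℝ, ∃ φ : ℝ → ℝ, v ∅ = 0 ∧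
        (∀ y ∈ I, ∀ z ∈ I, y ≤ z → φ y ≤ φ z) ∧ φ 0 = 0 ∧
        ∀ x : Fin n → ℝ, (∀ i, x i ∈ I) → f x = Cv v (fun i => φ (x i))) ∧
      ∃ S : Finset (Fin n), f (indTuple S 1) ≠ 0)
    ↔
    ((ComonModularOn I f ∨ InvHMinDiffOn I f) ∧
      ∃ φ : ℝ → ℝ, (∀ y ∈ I, ∀ z ∈ I, y ≤ z → φ y ≤ φ z) ∧ φ 0 = 0 ∧
        ∀ x ∈ I, ∀ S : Finset (Fin n),
          f (indTuple S x) = Real.sign x * φ x * f (indTuple S (Real.sign x))) := by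
  classical
  have h0I : (0 : ℝ) ∈ I := hIcc ⟨le_refl 0, zero_le_one⟩
  have h1I : (1 : ℝ) ∈ I := hIcc ⟨zero_le_one, le_refl 1⟩
  constructor
  · rintro ⟨⟨v, φ, hv0, hφmono, hφ0, hrep⟩, S0, hS0⟩
    have hφpos : ∀ a ∈ I, 0 ≤ φ a := by
      intro a ha
      have h := hφmono 0 h0I a ha (Set.mem_Ici.mp (hIpos ha))
      rw [hφ0] at h
      exact h
    have hfind : ∀ a ∈ I, ∀ S : Finset (Fin n), f (indTuple S a) = φ a * v S := by
      intro a ha S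
      have hmem : ∀ i, indTuple S a i ∈ I := by
        intro i
        simp only [indTuple]
        split
        · exact ha
        · exact h0I
      rw [hrep _ hmem]
      have hcomp : (fun i => φ (indTuple S a i)) = indTuple S (φ a) := by
        funext i
        simp only [indTuple]
        split
        · rfl
        · exact hφ0
      rw [hcomp, Cv_indTuple v hv0 (hφpos a ha)]
    have hφ1ne : φ 1 ≠ 0 := by
      intro h
      exact hS0 (by rw [hfind 1 h1I S0, h, zero_mul])
    have hφ1pos : 0 < φ 1 := lt_of_le_of_ne (hφpos 1 h1I) (Ne.symm hφ1ne)
    constructor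
    · left
      intro x y hx hy hcom
      obtain ⟨σ, hxσ, hyσ⟩ := hcom
      have hminI : ∀ i, min (x i) (y i) ∈ I := by
        intro i
        rcases le_total (x i) (y i) with h | h
        · rw [min_eq_left h]; exact hx i
        · rw [min_eq_right h]; exact hy i
      have hmaxI : ∀ i, max (x i) (y i) ∈ I := by
        intro i
        rcases le_total (x i) (y i) with h | h
        · rw [max_eq_right h]; exact hy i
        · rw [max_eq_left h]; exact hx i
      have hφx : Monotone ((fun i => φ (x i)) ∘ σ) := fun i j hij =>
        hφmono _ (hx _) _ (hx _) (hxσ hij)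
      have hφy : Monotone ((fun i => φ (y i)) ∘ σ) := fun i j hij =>
        hφmono _ (hy _) _ (hy _) (hyσ hij)
      have hφm : Monotone ((fun i => φ (min (x i) (y i))) ∘ σ) := fun i j hij =>
        hφmono _ (hminI _) _ (hminI _) (min_le_min (hxσ hij) (hyσ hij))
      have hφM : Monotone ((fun i => φ (max (x i) (y i))) ∘ σ) := fun i j hij =>
        hφmono _ (hmaxI _) _ (hmaxI _) (max_le_max (hxσ hij) (hyσ hij))
      rw [hrep x hx, hrep y hy, hrep _ hminI, hrep _ hmaxI]
      rw [Cv_eq_of_monotone v _ hφx, Cv_eq_of_monotone v _ hφy,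
        Cv_eq_of_monotone v _ hφm, Cv_eq_of_monotone v _ hφM]
      rw [← Finset.sum_add_distrib, ← Finset.sum_add_distrib]
      refine Finset.sum_congr rfl fun i _ => ?_
      rcases le_total (x (σ i)) (y (σ i)) with h | h
      · rw [min_eq_left h, max_eq_right h]
      · rw [min_eq_right h, max_eq_left h]
        ring
    · refine ⟨fun t => φ t / φ 1, ?_, by simp [hφ0], ?_⟩
      · intro yy hyy zz hzz hle
        have h := hφmono _ hyy _ hzz hle
        show φ yy / φ 1 ≤ φ zz / φ 1
        rw [div_eq_mul_inv, div_eq_mul_inv]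
        exact mul_le_mul_of_nonneg_right h (inv_nonneg.mpr hφ1pos.le)
      · intro a haI S
        show f (indTuple S a) = Real.sign a * (φ a / φ 1) * f (indTuple S (Real.sign a))
        have ha0 : (0 : ℝ) ≤ a := Set.mem_Ici.mp (hIpos haI)
        rcases ha0.eq_or_lt with h | hapos
        · rw [← h, Real.sign_zero, hfind 0 h0I S, hφ0]
          ring
        · rw [Real.sign_of_pos hapos, hfind a haI S, hfind 1 h1I S]
          field_simp
  · rintro ⟨hstruct, φ, hφmono, hφ0, hsc⟩
    set v : Finset (Fin n) → ℝ := fun T => f (indTuple T 1) with hvdef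
    have hv0 : v ∅ = 0 := by
      rw [hvdef]
      dsimp only
      have h1 : indTuple (∅ : Finset (Fin n)) (1 : ℝ) = fun _ => 0 := by
        funext j; simp [indTuple]
      rw [h1, hf0]
    have hv : ∀ a ∈ I, ∀ T : Finset (Fin n), f (indTuple T a) = φ a * v T := by
      intro a ha T
      have ha0 : (0 : ℝ) ≤ a := Set.mem_Ici.mp (hIpos ha)
      rcases ha0.eq_or_lt with h | hapos
      · have h1 : indTuple T a = fun _ => (0 : ℝ) := by
          funext j; simp [indTuple, ← h]
        rw [h1, hf0, ← h, hφ0, zero_mul]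
      · have h2 := hsc a ha T
        rwa [Real.sign_of_pos hapos, one_mul] at h2
    have hrepr : ∀ x : Fin n → ℝ, (∀ i, x i ∈ I) → ∀ σ : Equiv.Perm (Fin n),
        Monotone (x ∘ σ) →
        f x = ∑ i : Fin n, φ (x (σ i)) * (v (SUp σ (i : ℕ)) - v (SUp σ ((i : ℕ) + 1))) := by
      rcases hstruct with hmod | hinv
      · intro x hx σ hσ
        exact repr_of_modular h0I hIpos hf0 hmod φ v hv hx hσ
      · intro x hx σ hσ
        exact repr_of_inv h0I hIpos hf0 hinv φ hφ0 v hv _ x hx le_rfl σ hσ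
    constructor
    · refine ⟨v, φ, hv0, hφmono, hφ0, ?_⟩
      intro x hx
      have hσ : Monotone (x ∘ Tuple.sort x) := Tuple.monotone_sort x
      have hφσ : Monotone ((fun i => φ (x i)) ∘ Tuple.sort x) := fun i j hij =>
        hφmono _ (hx _) _ (hx _) (hσ hij)
      rw [hrepr x hx (Tuple.sort x) hσ, Cv_eq_of_monotone v _ hφσ]
    · by_contra hno
      push_neg at hno
      obtain ⟨x, y, hx, hy, hxy⟩ := hnc
      have hzero : ∀ z : Fin n → ℝ, (∀ i, z i ∈ I) → f z = 0 := by
        intro z hz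
        rw [hrepr z hz (Tuple.sort z) (Tuple.monotone_sort z)]
        refine Finset.sum_eq_zero fun i _ => ?_
        have hz1 : v (SUp (Tuple.sort z) (i : ℕ)) = 0 := hno _
        have hz2 : v (SUp (Tuple.sort z) ((i : ℕ) + 1)) = 0 := hno _
        rw [hz1, hz2]
        ring
      exact hxy (by rw [hzero x hx, hzero y hy])
end
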